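/- Let p ⊂ ℝ^d be a polytope with vertex set V(p), and for a vertex s let the supporting cone be s + c_s. Suppose for each vertex s we have a meromorphic germ F_s(ξ) at 0 ∈ (ℝ^d)* such that ∑_{s ∈ V(p)} e^{n⟨ξ,s⟩} F_s(ξ) is analytic at ξ = 0 for every n ∈ ℕ, and each F_s lies in the space of quotients of analytic germs by products of linear forms, with homogeneous decomposition F_s = ∑_j (F_s)_{[j]}. Then for each m ≥ 0, the function ξ ↦ (1/m!) ∑_{s ∈ V(p)} ⟨ξ,s⟩^m F_s(ξ) is analytic at ξ = 0, and its value at 0 equals (1/m!)∑_s (⟨ξ,s⟩^m F_s(ξ))_{[0]} evaluated as the constant degree-0 term. -/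

import Mathlib

open Filter Topology

lemma laurent_vanish (P : ℤ) (Q : Finset ℤ) :
    ∀ (c : ℤ → ℂ), (∀ q ∈ Q, q ≤ P) →
    Filter.Tendsto (fun t : ℝ => (∑ q ∈ Q, c q * (t : ℂ) ^ q) * (t : ℂ) ^ (-P))
      (𝓝[>] 0) (𝓝 0) →
    ∀ q ∈ Q, c q = 0 := by
  induction Q using Finset.strongInduction with
  | _ Q ih =>
    intro c hQ h
    rcases Q.eq_empty_or_nonempty with rfl | hne
    · simp
    set q0 := Q.min' hne with hq0
    have hq0mem : q0 ∈ Q := Q.min'_mem hne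
    have hq0le : ∀ q ∈ Q, q0 ≤ q := fun q hq => Q.min'_le q hq
    -- t ↦ (t:ℂ) ^ (e : ℤ) for e ≥ 0 tends to 0^(toNat e)
    have key : ∀ e : ℤ, 0 ≤ e → Filter.Tendsto (fun t : ℝ => (t : ℂ) ^ e)
        (𝓝[>] 0) (𝓝 ((0 : ℂ) ^ e.toNat)) := by
      intro e he
      have : (fun t : ℝ => (t : ℂ) ^ e) = fun t : ℝ => (t : ℂ) ^ e.toNat := by
        funext t
        rw [← zpow_natCast, Int.toNat_of_nonneg he]
      rw [this]
      have : Filter.Tendsto (fun t : ℝ => (t : ℂ) ^ e.toNat) (𝓝 0) (𝓝 ((0:ℂ) ^ e.toNat)) := by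
        have hc : Continuous fun t : ℝ => (t : ℂ) ^ e.toNat :=
          (Complex.continuous_ofReal).pow _
        simpa using hc.tendsto 0
      exact this.mono_left nhdsWithin_le_nhds
    -- limit 1 : S(t) * t^(-q0) → c q0
    have lim1 : Filter.Tendsto (fun t : ℝ => (∑ q ∈ Q, c q * (t : ℂ) ^ q) * (t : ℂ) ^ (-q0))
        (𝓝[>] 0) (𝓝 (c q0)) := by
      have heq : ∀ᶠ t : ℝ in 𝓝[>] 0,
          (∑ q ∈ Q, c q * (t : ℂ) ^ q) * (t : ℂ) ^ (-q0)
            = ∑ q ∈ Q, c q * (t : ℂ) ^ (q - q0) := by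
        filter_upwards [self_mem_nhdsWithin] with t ht
        have ht0 : (t : ℂ) ≠ 0 := by
          simpa using ne_of_gt (show (0:ℝ) < t from ht)
        rw [Finset.sum_mul]
        refine Finset.sum_congr rfl fun q hq => ?_
        rw [mul_assoc, ← zpow_add₀ ht0, sub_eq_add_neg]
      rw [Filter.tendsto_congr' heq]
      have : Filter.Tendsto (fun t : ℝ => ∑ q ∈ Q, c q * (t : ℂ) ^ (q - q0)) (𝓝[>] 0)
          (𝓝 (∑ q ∈ Q, c q * (0 : ℂ) ^ (q - q0).toNat)) := by
        refine tendsto_finset_sum _ fun q hq => ?_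
        exact Filter.Tendsto.const_mul _ (key _ (sub_nonneg.mpr (hq0le q hq)))
      convert this using 2
      rw [Finset.sum_eq_single q0]
      · simp
      · intro q hq hne'
        have : 0 < (q - q0).toNat := by
          have : q0 < q := lt_of_le_of_ne (hq0le q hq) (Ne.symm hne')
          omega
        rw [zero_pow (by omega), mul_zero]
      · intro habs; exact absurd hq0mem habs
    -- limit 2 : same function → 0
    have lim2 : Filter.Tendsto (fun t : ℝ => (∑ q ∈ Q, c q * (t : ℂ) ^ q) * (t : ℂ) ^ (-q0))
        (𝓝[>] 0) (𝓝 0) := by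
      have heq : ∀ᶠ t : ℝ in 𝓝[>] 0,
          ((∑ q ∈ Q, c q * (t : ℂ) ^ q) * (t : ℂ) ^ (-P)) * (t : ℂ) ^ (P - q0)
            = (∑ q ∈ Q, c q * (t : ℂ) ^ q) * (t : ℂ) ^ (-q0) := by
        filter_upwards [self_mem_nhdsWithin] with t ht
        have ht0 : (t : ℂ) ≠ 0 := by
          simpa using ne_of_gt (show (0:ℝ) < t from ht)
        rw [mul_assoc, ← zpow_add₀ ht0]
        ring_nf
      rw [← Filter.tendsto_congr' heq]
      have h2 := (h.mul (key (P - q0) (sub_nonneg.mpr (hQ q0 hq0mem))))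
      simpa using h2
    have hc0 : c q0 = 0 := tendsto_nhds_unique lim1 lim2
    have herase : ∀ q ∈ Q.erase q0, c q = 0 := by
      refine ih (Q.erase q0) (Finset.erase_ssubset hq0mem) c
        (fun q hq => hQ q (Finset.mem_of_mem_erase hq)) ?_
      have : (fun t : ℝ => (∑ q ∈ Q.erase q0, c q * (t : ℂ) ^ q) * (t : ℂ) ^ (-P))
          = fun t : ℝ => (∑ q ∈ Q, c q * (t : ℂ) ^ q) * (t : ℂ) ^ (-P) := by
        funext t
        congr 1
        rw [← Finset.add_sum_erase _ _ hq0mem, hc0, zero_mul, zero_add]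
      rw [this]
      exact h
    intro q hq
    rcases eq_or_ne q q0 with rfl | hne'
    · exact hc0
    · exact herase q (Finset.mem_erase.mpr ⟨hne', hq⟩)

lemma coeff_extract (D m : ℕ) : ∃ w : ℕ → ℂ, ∀ Q : Polynomial ℂ,
    Q.degree < (D + 1 : ℕ) →
    Q.coeff m = ∑ n ∈ Finset.range (D + 1), w n * Q.eval (n : ℂ) := by
  refine ⟨fun n => (Lagrange.basis (Finset.range (D + 1)) (fun i : ℕ => (i : ℂ)) n).coeff m,
    fun Q hQ => ?_⟩
  have hinj : Set.InjOn (fun i : ℕ => (i : ℂ)) (Finset.range (D + 1)) := by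
    intro a _ b _ hab
    simpa using hab
  have hcard : Q.degree < (Finset.range (D + 1)).card := by
    simpa using hQ
  have := Lagrange.eq_interpolate hinj hcard
  conv_lhs => rw [this]
  rw [Lagrange.interpolate_apply, Polynomial.finset_sum_coeff]
  refine Finset.sum_congr rfl fun n hn => ?_
  rw [Polynomial.coeff_C_mul, mul_comm]

lemma exp_norm_le_three {x : ℂ} (hx : ‖x‖ ≤ 1) : ‖Complex.exp x‖ ≤ 3 := by
  rw [Complex.norm_exp]
  have hre : x.re ≤ 1 := le_trans (Complex.re_le_norm x) hx
  calc Real.exp x.re ≤ Real.exp 1 := Real.exp_le_exp.mpr hre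
    _ ≤ 3 := by linarith [Real.exp_one_lt_d9]

lemma exp_tail_bound {x : ℂ} (hx : ‖x‖ ≤ 1) {K : ℕ} (hK : 1 ≤ K) :
    ‖(∑ i ∈ Finset.range K, x ^ i / i.factorial) - Complex.exp x‖ ≤ 2 * ‖x‖ ^ K := by
  have h := Complex.exp_bound hx (show 0 < K by omega)
  rw [norm_sub_rev]
  refine h.trans ?_
  have hfac : (1:ℝ) ≤ K.factorial := by exact_mod_cast Nat.one_le_iff_ne_zero.mpr K.factorial_pos.ne'
  have hK1 : (1:ℝ) ≤ K := by exact_mod_cast hK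
  have hpos : (0:ℝ) < K.factorial * K := by positivity
  have h2 : ((K.succ : ℝ) * ((K.factorial : ℝ) * K)⁻¹) ≤ 2 := by
    rw [← div_eq_mul_inv, div_le_iff₀ hpos]
    push_cast
    nlinarith
  calc ‖x‖ ^ K * ((K.succ : ℝ) * ((K.factorial : ℝ) * K)⁻¹)
      ≤ ‖x‖ ^ K * 2 := by
        apply mul_le_mul_of_nonneg_left h2 (by positivity)
    _ = 2 * ‖x‖ ^ K := by ring

theorem brion_coefficient_extraction (d : ℕ) (S : Finset (Fin d → ℝ))
    (p : Set (Fin d → ℝ)) (hp : p = convexHull ℝ (S : Set (Fin d → ℝ)))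
    (hvert : ∀ s ∈ S, s ∈ Set.extremePoints ℝ p)
    (pair : (Fin d → ℝ) → (Fin d → ℝ) → ℝ)
    (hpair : ∀ ξ x, pair ξ x = ∑ i, ξ i * x i)
    (F : (Fin d → ℝ) → (Fin d → ℝ) → ℂ)
    (J : Finset ℤ) (Fc : (Fin d → ℝ) → ℤ → (Fin d → ℝ) → ℂ)
    (U : Set (Fin d → ℝ)) (hUopen : IsOpen U) (hUdense : Dense U)
    (hUcone : ∀ t : ℝ, t ≠ 0 → ∀ ξ ∈ U, t • ξ ∈ U)
    (hhom : ∀ s ∈ S, ∀ j ∈ J, ∀ t : ℝ, t ≠ 0 → ∀ ξ ∈ U,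
      Fc s j (t • ξ) = (t : ℂ) ^ j * Fc s j ξ)
    (hzero : ∀ s ∈ S, ∀ j : ℤ, j ∉ J → Fc s j = 0)
    (hdecomp : ∀ s ∈ S, ∀ ξ ∈ U, F s ξ = ∑ j ∈ J, Fc s j ξ)
    (hanalytic : ∀ n : ℕ, ∃ G : (Fin d → ℝ) → ℂ, AnalyticAt ℝ G 0 ∧
      ∀ᶠ ξ in nhds (0 : Fin d → ℝ), ξ ∈ U →
        G ξ = ∑ s ∈ S, Complex.exp ((n : ℂ) * (pair ξ s : ℂ)) * F s ξ) :
    ∀ m : ℕ, ∃ H : (Fin d → ℝ) → ℂ, AnalyticAt ℝ H 0 ∧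
      (∀ᶠ ξ in nhds (0 : Fin d → ℝ), ξ ∈ U →
        H ξ = (1 / (m.factorial : ℂ)) * ∑ s ∈ S, (pair ξ s : ℂ) ^ m * F s ξ) ∧
      (∀ ξ ∈ U, H 0 = (1 / (m.factorial : ℂ)) *
        ∑ s ∈ S, (pair ξ s : ℂ) ^ m * Fc s (-(m : ℤ)) ξ) := by
  classical
  intro m
  -- trivial case `J = ∅`
  rcases J.eq_empty_or_nonempty with rfl | hJne
  · refine ⟨0, analyticAt_const, ?_, ?_⟩
    · refine Filter.Eventually.of_forall fun ξ hξ => ?_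
      have : ∀ s ∈ S, F s ξ = 0 := fun s hs => by simpa using hdecomp s hs ξ hξ
      rw [Finset.sum_congr rfl fun s hs => by rw [this s hs, mul_zero]]
      simp
    · intro ξ hξ
      have : ∀ s ∈ S, Fc s (-(m:ℤ)) ξ = 0 := fun s hs => by
        rw [hzero s hs _ (Finset.notMem_empty _)]; rfl
      rw [Finset.sum_congr rfl fun s hs => by rw [this s hs, mul_zero]]
      simp
  -- setup
  choose G hGa hGeq using hanalytic
  have hser : ∀ n : ℕ, ∃ ps : FormalMultilinearSeries ℝ (Fin d → ℝ) ℂ,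
      HasFPowerSeriesAt (G n) ps 0 := fun n => hGa n
  choose ser hser using hser
  set jmin := J.min' hJne with hjmin
  set jmax := J.max' hJne with hjmax
  set lo : ℤ := min jmin 0 with hlo
  set P : ℤ := max ((m : ℤ) + jmax) 0 with hP
  have hP0 : 0 ≤ P := le_max_right _ _
  have hlo0 : lo ≤ 0 := min_le_right _ _
  set D : ℕ := (P - lo).toNat with hD
  set Pp : ℕ → ℕ → (Fin d → ℝ) → ℂ := fun n k ξ => ser n k (fun _ => ξ) with hPp
  set L : ℕ → ℤ → (Fin d → ℝ) → ℂ := fun n q ξ =>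
    ∑ j ∈ J.filter (· ≤ q), ∑ s ∈ S,
      ((n : ℂ) * (pair ξ s : ℂ)) ^ (q - j).toNat / ((q - j).toNat).factorial * Fc s j ξ
    with hL
  set γ : ℤ → ℤ → (Fin d → ℝ) → ℂ := fun q j ξ =>
    ∑ s ∈ S, (pair ξ s : ℂ) ^ (q - j).toNat / ((q - j).toNat).factorial * Fc s j ξ with hγ
  have pair_smul : ∀ (t : ℝ) (ξ x : Fin d → ℝ), pair (t • ξ) x = t * pair ξ x := by
    intro t ξ x
    simp only [hpair, Pi.smul_apply, smul_eq_mul, Finset.mul_sum, mul_assoc]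
  -- the core identity
  have core : ∀ (n : ℕ) (ξ : Fin d → ℝ), ξ ∈ U → ∀ q ∈ Finset.Icc lo P,
      L n q ξ = if q < 0 then 0 else Pp n q.toNat ξ := by
    intro n ξ hξ
    set N : ℕ := P.toNat + 1 with hN
    have hNP : (N : ℤ) = P + 1 := by omega
    -- the nonnegative part coincides with partial sums of the power series
    have hB : ∀ t : ℝ,
        (∑ q ∈ Finset.Icc lo P, (if q < 0 then (0:ℂ) else Pp n q.toNat ξ) * (t : ℂ) ^ q)
          = (ser n).partialSum N (t • ξ) := by
      intro t
      have h1 : ∀ k : ℕ, ser n k (fun _ => t • ξ) = (t : ℂ) ^ k * Pp n k ξ := by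
        intro k
        have heq : (fun _ : Fin k => t • ξ) = fun i : Fin k => t • ((fun _ : Fin k => ξ) i) := rfl
        rw [heq, (ser n k).map_smul_univ (fun _ : Fin k => t) (fun _ : Fin k => ξ)]
        rw [Finset.prod_const, Finset.card_univ, Fintype.card_fin, Complex.real_smul,
          Complex.ofReal_pow]
      rw [FormalMultilinearSeries.partialSum, Finset.sum_congr rfl (fun k _ => h1 k)]
      rw [← Finset.sum_filter_add_sum_filter_not (Finset.Icc lo P) (fun q => q < 0)]
      have h2 : (∑ q ∈ (Finset.Icc lo P).filter (fun q => q < 0),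
          (if q < 0 then (0:ℂ) else Pp n q.toNat ξ) * (t : ℂ) ^ q) = 0 := by
        refine Finset.sum_eq_zero fun q hq => ?_
        rw [if_pos (Finset.mem_filter.mp hq).2, zero_mul]
      rw [h2, zero_add]
      refine Finset.sum_nbij' (fun q => q.toNat) (fun k => (k : ℤ)) ?_ ?_ ?_ ?_ ?_
      · intro q hq
        simp only [Finset.mem_filter, Finset.mem_Icc, not_lt] at hq
        simp only [Finset.mem_range]
        omega
      · intro k hk
        simp only [Finset.mem_range] at hk
        simp only [Finset.mem_filter, Finset.mem_Icc, not_lt]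
        omega
      · intro q hq
        simp only [Finset.mem_filter, Finset.mem_Icc, not_lt] at hq
        omega
      · intro k _
        simp
      · intro q hq
        simp only [Finset.mem_filter, Finset.mem_Icc, not_lt] at hq
        rw [if_neg (by omega), mul_comm]
        congr 1
        rw [← zpow_natCast]
        congr 1
        omega
    have tend : Filter.Tendsto (fun t : ℝ =>
        (∑ q ∈ Finset.Icc lo P,
          (L n q ξ - (if q < 0 then (0:ℂ) else Pp n q.toNat ξ)) * (t : ℂ) ^ q) * (t : ℂ) ^ (-P))
        (𝓝[>] 0) (𝓝 0) := by
      have hsplit : ∀ t : ℝ,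
          (∑ q ∈ Finset.Icc lo P,
            (L n q ξ - (if q < 0 then (0:ℂ) else Pp n q.toNat ξ)) * (t : ℂ) ^ q) * (t : ℂ) ^ (-P)
          = ((∑ q ∈ Finset.Icc lo P, L n q ξ * (t : ℂ) ^ q) - G n (t • ξ)) * (t : ℂ) ^ (-P)
            + ((G n (t • ξ)) - (ser n).partialSum N (t • ξ)) * (t : ℂ) ^ (-P) := by
        intro t
        rw [← hB t]
        rw [Finset.sum_congr rfl (fun q _ => sub_mul (L n q ξ) _ ((t:ℂ)^q)),
          Finset.sum_sub_distrib]
        ring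
      simp only [hsplit]
      have T2 : Filter.Tendsto (fun t : ℝ =>
          ((G n (t • ξ)) - (ser n).partialSum N (t • ξ)) * (t : ℂ) ^ (-P))
          (𝓝[>] 0) (𝓝 0) := by
        obtain ⟨C, hC⟩ := ((hser n).isBigO_sub_partialSum_pow N).bound
        have hcomp : Filter.Tendsto (fun t : ℝ => t • ξ) (𝓝[>] (0:ℝ)) (𝓝 (0 : Fin d → ℝ)) := by
          have hcont : Continuous fun t : ℝ => t • ξ := continuous_id.smul continuous_const
          have h0 := hcont.tendsto 0
          rw [zero_smul] at h0
          exact h0.mono_left nhdsWithin_le_nhds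
        refine squeeze_zero_norm' (a := fun t => (C * ‖ξ‖ ^ N) * t) ?_ ?_
        · filter_upwards [hcomp.eventually hC, self_mem_nhdsWithin] with t hCt ht
          have ht0 : (0:ℝ) < t := ht
          rw [norm_mul, norm_zpow, Complex.norm_real, Real.norm_eq_abs, abs_of_pos ht0]
          have h1 : ‖G n (t • ξ) - (ser n).partialSum N (t • ξ)‖ ≤ C * ‖t • ξ‖ ^ N := by
            simpa [norm_pow] using hCt
          calc ‖G n (t • ξ) - (ser n).partialSum N (t • ξ)‖ * t ^ (-P)
              ≤ (C * ‖t • ξ‖ ^ N) * t ^ (-P) := by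
                exact mul_le_mul_of_nonneg_right h1 (zpow_nonneg (le_of_lt ht0) _)
            _ = (C * ‖ξ‖ ^ N) * t := by
                rw [norm_smul, Real.norm_eq_abs, abs_of_pos ht0, mul_pow]
                rw [show (C * (t ^ N * ‖ξ‖ ^ N)) * t ^ (-P)
                    = (C * ‖ξ‖ ^ N) * (t ^ N * t ^ (-P)) by ring]
                congr 1
                rw [← zpow_natCast t N, ← zpow_add₀ (ne_of_gt ht0)]
                rw [show (N:ℤ) + (-P) = 1 by omega, zpow_one]
        · have hcont : Continuous fun t : ℝ => (C * ‖ξ‖ ^ N) * t :=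
            continuous_const.mul continuous_id
          have h0 := hcont.tendsto 0
          rw [mul_zero] at h0
          exact h0.mono_left nhdsWithin_le_nhds
      have T1 : Filter.Tendsto (fun t : ℝ =>
          ((∑ q ∈ Finset.Icc lo P, L n q ξ * (t : ℂ) ^ q) - G n (t • ξ)) * (t : ℂ) ^ (-P))
          (𝓝[>] 0) (𝓝 0) := by
        obtain ⟨δ, hδpos, hδ⟩ := Metric.eventually_nhds_iff.mp (hGeq n)
        have hM0 : (0:ℝ) ≤ ∑ s ∈ S, |pair ξ s| := Finset.sum_nonneg fun s _ => abs_nonneg _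
        set M : ℝ := ∑ s ∈ S, |pair ξ s| with hMdef
        have hMs : ∀ s ∈ S, |pair ξ s| ≤ M := fun s hs =>
          Finset.single_le_sum (f := fun s => |pair ξ s|) (fun s _ => abs_nonneg _) hs
        set T0 : ℝ := min (min 1 (δ / (‖ξ‖ + 1))) (1 / ((n:ℝ) * M + 1)) with hT0def
        have hnM0 : (0:ℝ) ≤ (n:ℝ) * M := by positivity
        have hT0pos : 0 < T0 := by
          refine lt_min (lt_min one_pos (div_pos hδpos (by positivity))) (by positivity)
        have hxnorm : ∀ t : ℝ, t ∈ Set.Ioo (0:ℝ) T0 → ∀ s ∈ S,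
            ‖(n:ℂ) * ((t * pair ξ s : ℝ) : ℂ)‖ ≤ 1 ∧
            ‖(n:ℂ) * ((t * pair ξ s : ℝ) : ℂ)‖ = (n:ℝ) * (t * |pair ξ s|) := by
          intro t ht s hs
          have ht0 := ht.1
          have htT := ht.2
          have heq : ‖(n:ℂ) * ((t * pair ξ s : ℝ) : ℂ)‖ = (n:ℝ) * (t * |pair ξ s|) := by
            rw [norm_mul, Complex.norm_real, Complex.norm_natCast, Real.norm_eq_abs, abs_mul,
              abs_of_pos ht0]
          refine ⟨?_, heq⟩
          rw [heq]
          have h1 : t < 1 / ((n:ℝ) * M + 1) := lt_of_lt_of_le htT (min_le_right _ _)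
          have h2 : t * ((n:ℝ) * M + 1) < 1 := by
            rw [← lt_div_iff₀ (by positivity)]
            exact h1
          have h3 : |pair ξ s| ≤ M := hMs s hs
          have h4 : (n:ℝ) * (t * |pair ξ s|) ≤ (n:ℝ) * (t * M) :=
            mul_le_mul_of_nonneg_left
              (mul_le_mul_of_nonneg_left h3 (le_of_lt ht0)) (Nat.cast_nonneg n)
          have h5 : (n:ℝ) * (t * M) ≤ t * ((n:ℝ) * M + 1) := by nlinarith
          linarith
        have hmain : ∀ t : ℝ, t ∈ Set.Ioo (0:ℝ) T0 →
            ((∑ q ∈ Finset.Icc lo P, L n q ξ * (t : ℂ) ^ q) - G n (t • ξ)) * (t : ℂ) ^ (-P)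
            = ∑ j ∈ J, ∑ s ∈ S, Fc s j ξ * ((t : ℂ) ^ (j - P) *
                ((∑ k ∈ Finset.range ((P + 1 - j).toNat), ((n:ℂ) * ((t * pair ξ s : ℝ) : ℂ)) ^ k
                    / (k.factorial : ℂ))
                  - Complex.exp ((n:ℂ) * ((t * pair ξ s : ℝ) : ℂ)))) := by
          intro t ht
          obtain ⟨ht0, htT⟩ := ht
          have htne : (t:ℝ) ≠ 0 := ne_of_gt ht0
          have htC : (t:ℂ) ≠ 0 := by exact_mod_cast htne
          have hGt : G n (t • ξ) = ∑ j ∈ J, ∑ s ∈ S,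
              Fc s j ξ * ((t : ℂ) ^ (j:ℤ)
                * Complex.exp ((n:ℂ) * ((t * pair ξ s : ℝ) : ℂ))) := by
            have hdist : dist (t • ξ) (0 : Fin d → ℝ) < δ := by
              rw [dist_zero_right, norm_smul, Real.norm_eq_abs, abs_of_pos ht0]
              have h1 : t < δ / (‖ξ‖ + 1) :=
                lt_of_lt_of_le htT (le_trans (min_le_left _ _) (min_le_right _ _))
              have h2 : t * (‖ξ‖ + 1) < δ := by
                rw [← lt_div_iff₀ (by positivity)]
                exact h1
              nlinarith [norm_nonneg ξ]
            rw [hδ hdist (hUcone t htne ξ hξ)]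
            have hF : ∀ s ∈ S, F s (t • ξ) = ∑ j ∈ J, (t:ℂ)^(j:ℤ) * Fc s j ξ := by
              intro s hs
              rw [hdecomp s hs _ (hUcone t htne ξ hξ)]
              exact Finset.sum_congr rfl fun j hj => hhom s hs j hj t htne ξ hξ
            rw [Finset.sum_congr rfl (fun s hs => by rw [hF s hs, pair_smul])]
            rw [Finset.sum_congr rfl (fun s _ => Finset.mul_sum _ _ _), Finset.sum_comm]
            refine Finset.sum_congr rfl fun j _ => Finset.sum_congr rfl fun s _ => ?_
            push_cast
            ring
          have hA : (∑ q ∈ Finset.Icc lo P, L n q ξ * (t : ℂ) ^ q)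
              = ∑ j ∈ J, ∑ s ∈ S, Fc s j ξ * ((t : ℂ) ^ (j:ℤ) *
                  (∑ k ∈ Finset.range ((P + 1 - j).toNat), ((n:ℂ) * ((t * pair ξ s : ℝ):ℂ)) ^ k
                    / (k.factorial:ℂ))) := by
            simp only [hL, Finset.sum_mul]
            rw [Finset.sum_congr rfl (fun q (_ : q ∈ Finset.Icc lo P) =>
              Finset.sum_filter (fun j => j ≤ q)
                (fun j => ∑ s ∈ S, ((n : ℂ) * (pair ξ s : ℂ)) ^ (q - j).toNat
                  / ((q - j).toNat).factorial * Fc s j ξ * (t:ℂ) ^ q))]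
            rw [Finset.sum_comm]
            refine Finset.sum_congr rfl fun j hj => ?_
            rw [← Finset.sum_filter]
            have hIcc : (Finset.Icc lo P).filter (fun q => j ≤ q) = Finset.Icc j P := by
              ext q
              simp only [Finset.mem_filter, Finset.mem_Icc]
              have := J.min'_le j hj
              omega
            rw [hIcc, Finset.sum_comm]
            refine Finset.sum_congr rfl fun s hs => ?_
            rw [Finset.mul_sum, Finset.mul_sum]
            refine Finset.sum_nbij' (fun q => (q - j).toNat) (fun k => j + (k:ℤ))
              ?_ ?_ ?_ ?_ ?_
            · intro q hq
              simp only [Finset.mem_Icc] at hq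
              simp only [Finset.mem_range]
              omega
            · intro k hk
              simp only [Finset.mem_range] at hk
              simp only [Finset.mem_Icc]
              omega
            · intro q hq
              simp only [Finset.mem_Icc] at hq
              omega
            · intro k _
              simp
            · intro q hq
              simp only [Finset.mem_Icc] at hq
              have hqj : q = j + (((q - j).toNat : ℕ) : ℤ) := by omega
              rw [show (t:ℂ)^q = (t:ℂ)^(j:ℤ) * (t:ℂ)^((((q - j).toNat : ℕ)) : ℤ) by
                rw [← zpow_add₀ htC, ← hqj]]
              rw [zpow_natCast]
              push_cast
              ring
          rw [hGt, hA, ← Finset.sum_sub_distrib, Finset.sum_mul]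
          refine Finset.sum_congr rfl fun j _ => ?_
          rw [← Finset.sum_sub_distrib, Finset.sum_mul]
          refine Finset.sum_congr rfl fun s _ => ?_
          rw [zpow_sub₀ htC]
          rw [zpow_neg]
          ring
        refine squeeze_zero_norm' (a := fun t =>
            (∑ j ∈ J, ∑ s ∈ S,
              ‖Fc s j ξ‖ * (3 * ((n:ℝ) * |pair ξ s| + 1) ^ (P + 1 - j).toNat)) * t) ?_ ?_
        · filter_upwards [Ioo_mem_nhdsGT_of_mem (Set.left_mem_Ico.mpr hT0pos)] with t ht
          rw [hmain t ht]
          obtain ⟨ht0, htT⟩ := ht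
          have ht1 : t ≤ 1 :=
            le_of_lt (lt_of_lt_of_le htT (le_trans (min_le_left _ _) (min_le_left _ _)))
          rw [Finset.sum_mul]
          refine le_trans (norm_sum_le _ _) (Finset.sum_le_sum fun j _ => ?_)
          rw [Finset.sum_mul]
          refine le_trans (norm_sum_le _ _) (Finset.sum_le_sum fun s hs => ?_)
          obtain ⟨hx1, hx2⟩ := hxnorm t ⟨ht0, htT⟩ s hs
          have htpow : ∀ e : ℤ, ‖(t:ℂ) ^ e‖ = t ^ e := by
            intro e
            rw [norm_zpow, Complex.norm_real, Real.norm_eq_abs, abs_of_pos ht0]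
          rw [norm_mul, norm_mul, htpow]
          have key : t ^ (j - P) *
              ‖(∑ k ∈ Finset.range ((P + 1 - j).toNat),
                  ((n:ℂ) * ((t * pair ξ s : ℝ) : ℂ)) ^ k / (k.factorial : ℂ))
                - Complex.exp ((n:ℂ) * ((t * pair ξ s : ℝ) : ℂ))‖
              ≤ (3 * ((n:ℝ) * |pair ξ s| + 1) ^ (P + 1 - j).toNat) * t := by
            rcases le_or_gt j P with hjP | hjP
            · have hK1 : 1 ≤ (P + 1 - j).toNat := by omega
              have hbd := exp_tail_bound hx1 hK1
              have hA0 : (0:ℝ) ≤ (n:ℝ) * |pair ξ s| := by positivity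
              calc t ^ (j - P) *
                  ‖(∑ k ∈ Finset.range ((P + 1 - j).toNat),
                      ((n:ℂ) * ((t * pair ξ s : ℝ) : ℂ)) ^ k / (k.factorial : ℂ))
                    - Complex.exp ((n:ℂ) * ((t * pair ξ s : ℝ) : ℂ))‖
                  ≤ t ^ (j - P) * (2 * ‖(n:ℂ) * ((t * pair ξ s : ℝ) : ℂ)‖ ^ (P + 1 - j).toNat) :=
                    mul_le_mul_of_nonneg_left hbd (zpow_nonneg (le_of_lt ht0) _)
                _ = 2 * ((n:ℝ) * |pair ξ s|) ^ (P + 1 - j).toNat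
                      * (t ^ (((P + 1 - j).toNat : ℤ)) * t ^ (j - P)) := by
                    rw [hx2, show (n:ℝ) * (t * |pair ξ s|) = ((n:ℝ) * |pair ξ s|) * t by ring,
                      mul_pow, ← zpow_natCast t ((P + 1 - j).toNat)]
                    ring
                _ = 2 * ((n:ℝ) * |pair ξ s|) ^ (P + 1 - j).toNat * t := by
                    rw [← zpow_add₀ (ne_of_gt ht0),
                      show (((P + 1 - j).toNat : ℤ)) + (j - P) = 1 by omega, zpow_one]
                _ ≤ (3 * ((n:ℝ) * |pair ξ s| + 1) ^ (P + 1 - j).toNat) * t := by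
                    have h1 : ((n:ℝ) * |pair ξ s|) ^ (P + 1 - j).toNat
                        ≤ ((n:ℝ) * |pair ξ s| + 1) ^ (P + 1 - j).toNat :=
                      pow_le_pow_left₀ hA0 (by linarith) _
                    nlinarith [pow_nonneg hA0 ((P + 1 - j).toNat)]
            · rw [show (P + 1 - j).toNat = 0 by omega]
              rw [Finset.range_zero, Finset.sum_empty, zero_sub, norm_neg, pow_zero, mul_one]
              have hle : t ^ (j - P) ≤ t := by
                rw [show j - P = (((j - P).toNat : ℕ) : ℤ) by omega, zpow_natCast]
                calc t ^ (j - P).toNat ≤ t ^ 1 :=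
                      pow_le_pow_of_le_one (le_of_lt ht0) ht1 (by omega)
                  _ = t := pow_one t
              have hexp3 := exp_norm_le_three hx1
              have hpos : (0:ℝ) ≤ t ^ (j - P) := zpow_nonneg (le_of_lt ht0) _
              nlinarith
          calc ‖Fc s j ξ‖ * (t ^ (j - P) * ‖_ - Complex.exp ((n:ℂ) * ((t * pair ξ s : ℝ) : ℂ))‖)
              ≤ ‖Fc s j ξ‖ * ((3 * ((n:ℝ) * |pair ξ s| + 1) ^ (P + 1 - j).toNat) * t) :=
                mul_le_mul_of_nonneg_left key (norm_nonneg _)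
            _ = ‖Fc s j ξ‖ * (3 * ((n:ℝ) * |pair ξ s| + 1) ^ (P + 1 - j).toNat) * t := by ring
        · have hcont : Continuous fun t : ℝ =>
              (∑ j ∈ J, ∑ s ∈ S,
                ‖Fc s j ξ‖ * (3 * ((n:ℝ) * |pair ξ s| + 1) ^ (P + 1 - j).toNat)) * t :=
            continuous_const.mul continuous_id
          have h0 := hcont.tendsto 0
          rw [mul_zero] at h0
          exact h0.mono_left nhdsWithin_le_nhds
      simpa using T1.add T2
    intro q hq
    exact sub_eq_zero.mp (laurent_vanish P (Finset.Icc lo P) _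
      (fun q hq => (Finset.mem_Icc.mp hq).2) tend q hq)
  -- polynomial bookkeeping
  obtain ⟨w, hw⟩ := coeff_extract D m
  set Qp : ℤ → (Fin d → ℝ) → Polynomial ℂ := fun q ξ =>
    ∑ j ∈ J.filter (· ≤ q), Polynomial.C (γ q j ξ) * Polynomial.X ^ (q - j).toNat with hQp
  have hQeval : ∀ (q : ℤ) (ξ : Fin d → ℝ) (n : ℕ), (Qp q ξ).eval (n : ℂ) = L n q ξ := by
    intro q ξ n
    simp only [hQp, hL, Polynomial.eval_finset_sum, Polynomial.eval_mul, Polynomial.eval_C,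
      Polynomial.eval_pow, Polynomial.eval_X, hγ]
    refine Finset.sum_congr rfl fun j hj => ?_
    rw [Finset.sum_mul]
    refine Finset.sum_congr rfl fun s hs => ?_
    rw [mul_pow]
    ring
  have hQdeg : ∀ (q : ℤ), q ≤ P → ∀ ξ, (Qp q ξ).degree < (D + 1 : ℕ) := by
    intro q hq ξ
    refine lt_of_le_of_lt (Polynomial.degree_sum_le _ _) ?_
    rw [Finset.sup_lt_iff (by exact_mod_cast WithBot.bot_lt_coe (D + 1))]
    intro j hj
    refine lt_of_le_of_lt (Polynomial.degree_C_mul_X_pow_le _ _) ?_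
    rw [Nat.cast_lt]
    have hj1 : jmin ≤ j := J.min'_le j (Finset.mem_filter.mp hj).1
    have hj2 : j ≤ q := (Finset.mem_filter.mp hj).2
    omega
  have hQcoeff : ∀ (j : ℤ), j ∈ J → ∀ ξ, (Qp ((m : ℤ) + j) ξ).coeff m = γ ((m : ℤ) + j) j ξ := by
    intro j hj ξ
    simp only [hQp, Polynomial.finset_sum_coeff, Polynomial.coeff_C_mul, Polynomial.coeff_X_pow]
    rw [Finset.sum_eq_single j]
    · rw [if_pos (by omega), mul_one]
    · intro j' hj' hne
      have hj'2 : j' ≤ (m : ℤ) + j := (Finset.mem_filter.mp hj').2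
      rw [if_neg (by omega), mul_zero]
    · intro habs
      exact absurd (Finset.mem_filter.mpr ⟨hj, by omega⟩) habs
  -- the key consequence
  have key2 : ∀ ξ ∈ U, ∀ j ∈ J, γ ((m : ℤ) + j) j ξ =
      if ((m : ℤ) + j) < 0 then 0
      else ∑ n ∈ Finset.range (D + 1), w n * Pp n ((m : ℤ) + j).toNat ξ := by
    intro ξ hξ j hj
    have hqmem : (m : ℤ) + j ∈ Finset.Icc lo P := by
      rw [Finset.mem_Icc]
      constructor
      · have h1 : jmin ≤ j := J.min'_le j hj
        omega
      · have h2 : j ≤ jmax := J.le_max' j hj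
        omega
    rw [← hQcoeff j hj ξ, hw _ (hQdeg _ (Finset.mem_Icc.mp hqmem).2 ξ)]
    have : ∀ n ∈ Finset.range (D + 1), w n * (Qp ((m:ℤ)+j) ξ).eval (n : ℂ)
        = w n * (if ((m : ℤ) + j) < 0 then 0 else Pp n ((m : ℤ) + j).toNat ξ) := by
      intro n _
      rw [hQeval, core n ξ hξ _ hqmem]
    rw [Finset.sum_congr rfl this]
    by_cases hc : ((m : ℤ) + j) < 0 <;> simp [hc]
  -- analyticity of the diagonal power-series coefficients
  have hPpA : ∀ n k : ℕ, AnalyticAt ℝ (Pp n k) 0 := by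
    intro n k
    have h2 := (ContinuousLinearMap.pi
      (fun _ : Fin k => ContinuousLinearMap.id ℝ (Fin d → ℝ))).analyticAt (0 : Fin d → ℝ)
    have h1 : AnalyticAt ℝ (ser n k) (fun _ : Fin k => (0 : Fin d → ℝ)) :=
      (ser n k).analyticAt
    exact h1.comp h2
  refine ⟨fun ξ => ∑ j ∈ J, if ((m : ℤ) + j) < 0 then 0
      else ∑ n ∈ Finset.range (D + 1), w n * Pp n ((m : ℤ) + j).toNat ξ, ?_, ?_, ?_⟩
  · -- analyticity
    apply Finset.analyticAt_fun_sum
    intro j _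
    by_cases hc : ((m : ℤ) + j) < 0
    · simp only [if_pos hc]; exact analyticAt_const
    · simp only [if_neg hc]
      exact Finset.analyticAt_fun_sum _ (fun n _ => analyticAt_const.mul (hPpA n _))
  · -- the value on U
    refine Filter.Eventually.of_forall fun ξ hξ => ?_
    dsimp only
    have h1 : ∀ j ∈ J, (if ((m : ℤ) + j) < 0 then 0
        else ∑ n ∈ Finset.range (D + 1), w n * Pp n ((m : ℤ) + j).toNat ξ)
        = γ ((m : ℤ) + j) j ξ := fun j hj => (key2 ξ hξ j hj).symm
    rw [Finset.sum_congr rfl h1]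
    have h2 : ∀ j ∈ J, γ ((m : ℤ) + j) j ξ
        = ∑ s ∈ S, (pair ξ s : ℂ) ^ m / (m.factorial : ℂ) * Fc s j ξ := by
      intro j hj
      simp only [hγ, add_sub_cancel_right, Int.toNat_natCast]
    rw [Finset.sum_congr rfl h2, Finset.sum_comm, Finset.mul_sum]
    refine Finset.sum_congr rfl fun s hs => ?_
    rw [hdecomp s hs ξ hξ, Finset.mul_sum, Finset.mul_sum]
    refine Finset.sum_congr rfl fun j hj => ?_
    ring
  · -- the value at 0
    intro ξ hξ
    dsimp only
    have hzeroPp : ∀ (n k : ℕ), 0 < k → Pp n k 0 = 0 := by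
      intro n k hk
      exact (ser n k).map_coord_zero ⟨0, hk⟩ rfl
    have hPp0 : ∀ n : ℕ, Pp n 0 (0 : Fin d → ℝ) = Pp n 0 ξ := by
      intro n; simp only [hPp]; congr 1; funext i; exact i.elim0
    have hterm : ∀ j ∈ J, (if ((m : ℤ) + j) < 0 then 0
        else ∑ n ∈ Finset.range (D + 1), w n * Pp n ((m : ℤ) + j).toNat 0)
        = if j = -(m : ℤ) then γ 0 (-(m : ℤ)) ξ else 0 := by
      intro j hj
      rcases lt_trichotomy ((m : ℤ) + j) 0 with hc | hc | hc
      · rw [if_pos hc, if_neg (by omega)]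
      · have hj' : j = -(m : ℤ) := by omega
        rw [if_neg (by omega), if_pos hj']
        have htn : ((m : ℤ) + j).toNat = 0 := by omega
        rw [htn]
        have hk2 := key2 ξ hξ j hj
        rw [if_neg (by omega), htn] at hk2
        rw [Finset.sum_congr rfl (fun n _ => by rw [hPp0 n]), ← hk2, hj']
        norm_num
      · rw [if_neg (by omega), if_neg (by omega)]
        refine Finset.sum_eq_zero fun n _ => ?_
        rw [hzeroPp n _ (by omega), mul_zero]
    rw [Finset.sum_congr rfl hterm, Finset.sum_ite_eq' J (-(m : ℤ)) _]
    by_cases hmem : -(m : ℤ) ∈ J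
    · rw [if_pos hmem]
      have htn : ((0 : ℤ) - (-(m : ℤ))).toNat = m := by omega
      simp only [hγ, htn]
      rw [Finset.mul_sum]
      exact Finset.sum_congr rfl fun s hs => by ring
    · rw [if_neg hmem]
      have : ∀ s ∈ S, Fc s (-(m : ℤ)) ξ = 0 := fun s hs => by
        rw [hzero s hs _ hmem]; rfl
      rw [Finset.sum_congr rfl fun s hs => by rw [this s hs, mul_zero]]
      simp
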